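/- arXiv:0908.0859 — 3 statements merged into one kernel-verified Lean document; each statement's English description precedes it below -/
import Mathlib

section
/- For any natural number n, the alternating binomial sum ∑_{j=0}^{n} (-1)^j C(n,j) (n-2j)^n equals 2^n · n!. -/
open Finset fwdDiff

lemma fwdDiff_pow_aux (h : ℤ) : ∀ n k : ℕ, k ≤ n →
    (fwdDiff h)^[n] (fun x : ℤ => x ^ k) =
      fun _ => if k = n then (n.factorial : ℤ) * h ^ n else 0 := by
  intro n
  induction n with
  | zero =>
    intro k hk
    interval_cases k
    funext x
    simp
  | succ n IH =>
    intro k hk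
    have hd : fwdDiff h (fun x : ℤ => x ^ k)
        = ∑ j ∈ range k, ((k.choose j : ℤ) * h ^ (k - j)) • (fun x : ℤ => x ^ j) := by
      funext x
      have := add_pow x h k
      simp only [fwdDiff, Finset.sum_apply, Pi.smul_apply, smul_eq_mul]
      rw [this, Finset.sum_range_succ]
      simp only [Nat.sub_self, pow_zero, Nat.choose_self, Nat.cast_one, mul_one, one_mul]
      rw [add_sub_cancel_right]
      exact Finset.sum_congr rfl fun j _ => by ring
    rw [Function.iterate_succ_apply, hd, fwdDiff_iter_finset_sum]
    simp only [fwdDiff_iter_const_smul]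
    funext y
    simp only [Finset.sum_apply, Pi.smul_apply, smul_eq_mul]
    by_cases hk1 : k = n + 1
    · subst hk1
      rw [Finset.sum_congr rfl (fun j hj => by
        rw [IH j (Nat.lt_succ_iff.mp (Finset.mem_range.mp hj))])]
      rw [Finset.sum_range_succ]
      rw [Finset.sum_eq_zero (fun j hj => by
        simp [if_neg (Nat.ne_of_lt (Finset.mem_range.mp hj))])]
      simp [Nat.factorial_succ, Nat.choose_succ_self_right]
      ring
    · have hkn : k ≤ n := Nat.lt_succ_iff.mp (lt_of_le_of_ne hk hk1)
      rw [if_neg hk1]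
      apply Finset.sum_eq_zero
      intro j hj
      have hjn : j < n := lt_of_lt_of_le (Finset.mem_range.mp hj) hkn
      rw [IH j (le_of_lt hjn), if_neg (Nat.ne_of_lt hjn)]
      simp

/-- For any natural number `n`, the alternating binomial sum
`∑_{j=0}^{n} (-1)^j C(n,j) (n-2j)^n` equals `2^n · n!`. -/
theorem alternating_binomial_sum_pow_self (n : ℕ) :
    ∑ j ∈ Finset.range (n + 1),
      (-1 : ℤ) ^ j * (n.choose j : ℤ) * ((n : ℤ) - 2 * j) ^ n
      = 2 ^ n * (n.factorial : ℤ) := by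
  have key := fwdDiff_iter_eq_sum_shift (2 : ℤ) (fun x : ℤ => x ^ n) n (-(n : ℤ))
  rw [fwdDiff_pow_aux 2 n n le_rfl] at key
  simp only [if_pos rfl, smul_eq_mul] at key
  rw [← Finset.sum_range_reflect] at key
  simp only [Nat.add_sub_cancel, if_true] at key
  have heq : ∀ j ∈ Finset.range (n + 1),
      (-1 : ℤ) ^ (n - (n - j)) * (n.choose (n - j) : ℤ) * (-(n : ℤ) + (n - j) • (2 : ℤ)) ^ n
      = (-1 : ℤ) ^ j * (n.choose j : ℤ) * ((n : ℤ) - 2 * j) ^ n := by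
    intro j hj
    have hjn : j ≤ n := Nat.lt_succ_iff.mp (Finset.mem_range.mp hj)
    rw [Nat.sub_sub_self hjn, Nat.choose_symm hjn, nsmul_eq_mul, Nat.cast_sub hjn]
    ring_nf
  rw [Finset.sum_congr rfl heq] at key
  linarith [key]
end

section
/- Let (M, g) be a Riemannian manifold with an almost-complex structure J compatible with a closed 2-form ω via g(·,·) = ω(·, J·). If the identity (D_X ω)(Y,Z) = 2 g(JX, N(Y,Z)) holds, where N is the Nijenhuis tensor and D the Levi-Civita connection, then D_{JX} J = -J ∘ (D_X J) for all vector fields X. -/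
noncomputable section

/-- An abstract model of the vector-field calculus of an almost-Kähler
manifold: `R` plays the role of the ring of smooth functions, `X` of the
module of vector fields, `act` of the derivation action of vector fields on
functions, `bracket` of the Lie bracket, `D` of the Levi-Civita connection,
`J` of the almost-complex structure, `g` of the Riemannian metric and `ω` of
the (closed) symplectic form, with `g(·,·) = ω(·, J·)`. -/
structure AK (R : Type*) (X : Type*) [CommRing R] [Algebra ℝ R]
    [AddCommGroup X] [Module R X] where
  act : X → R → R
  bracket : X → X → X
  D : X → X → X
  J : X → X
  g : X → X → R
  ω : X → X → R
  act_addx : ∀ x y f, act (x + y) f = act x f + act y f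
  act_smulx : ∀ (h : R) (x : X) (f : R), act (h • x) f = h * act x f
  act_addf : ∀ x f h, act x (f + h) = act x f + act x h
  act_deriv : ∀ x f h, act x (f * h) = act x f * h + f * act x h
  act_bracket : ∀ x y f, act (bracket x y) f = act x (act y f) - act y (act x f)
  bracket_antisymm : ∀ x y, bracket x y = - bracket y x
  g_symm : ∀ x y, g x y = g y x
  g_add₁ : ∀ x y z, g (x + y) z = g x z + g y z
  g_add₂ : ∀ x y z, g x (y + z) = g x y + g x z
  g_smul₁ : ∀ (f : R) x y, g (f • x) y = f * g x y
  g_smul₂ : ∀ (f : R) x y, g x (f • y) = f * g x y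
  g_nondeg : ∀ x, (∀ y, g x y = 0) → x = 0
  J_add : ∀ x y, J (x + y) = J x + J y
  J_smul : ∀ (f : R) x, J (f • x) = f • J x
  J_sq : ∀ x, J (J x) = - x
  compat : ∀ x y, g x y = ω x (J y)
  g_Jinv : ∀ x y, g (J x) (J y) = g x y
  D_add₁ : ∀ x y z, D (x + y) z = D x z + D y z
  D_add₂ : ∀ x y z, D x (y + z) = D x y + D x z
  D_tensor : ∀ (f : R) x y, D (f • x) y = f • D x y
  D_leibniz : ∀ (f : R) x y, D x (f • y) = act x f • y + f • D x y
  D_torsionfree : ∀ x y, D x y - D y x = bracket x y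
  D_metric : ∀ x y z, act x (g y z) = g (D x y) z + g y (D x z)
  ω_closed : ∀ x y z,
    act x (ω y z) - act y (ω x z) + act z (ω x y)
      - ω (bracket x y) z + ω (bracket x z) y - ω (bracket y z) x = 0

namespace AK

variable {R : Type*} {X : Type*} [CommRing R] [Algebra ℝ R]
  [AddCommGroup X] [Module R X] [Module ℝ X] (C : AK R X)

/-- The Nijenhuis tensor `4N(X,Y) = [JX,JY] - [X,Y] - J[JX,Y] - J[X,JY]`. -/
def N (x y : X) : X :=
  (4 : ℝ)⁻¹ • (C.bracket (C.J x) (C.J y) - C.bracket x y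
    - C.J (C.bracket (C.J x) y) - C.J (C.bracket x (C.J y)))

/-- The covariant derivative `(D_X J)(Y)` of `J`. -/
def DJ (x y : X) : X := C.D x (C.J y) - C.J (C.D x y)

/-- The Riemann curvature operator `R(X,Y)Z`. -/
def Riem (x y z : X) : X :=
  C.D x (C.D y z) - C.D y (C.D x z) - C.D (C.bracket x y) z

variable {ι : Type*} [Fintype ι] [DecidableEq ι]

/-- The `*`-Ricci form `ρ* = R(ω)`, computed in the orthonormal frame `e`:
`ρ*(X,Y) = (1/2) ∑ᵢ g(R(X,Y)eᵢ, Jeᵢ)`. -/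
def rhoStar (e : ι → X) (x y : X) : R :=
  (2 : ℝ)⁻¹ • ∑ i, C.g (C.Riem x y (e i)) (C.J (e i))

/-- The hermitian Ricci form of the canonical hermitian connection, via
`ρ^∇(X,Y) = ρ*(X,Y) - (1/4) tr(J ∘ D_X J ∘ D_Y J)` (identity (2.10)). -/
def rho (e : ι → X) (x y : X) : R :=
  C.rhoStar e x y
    - (4 : ℝ)⁻¹ • ∑ i, C.g (C.J (C.DJ x (C.DJ y (e i)))) (e i)

/-- The hermitian scalar curvature `s^∇ = 2Λ_ω ρ^∇ = ∑ᵢ ρ^∇(eᵢ, Jeᵢ)`. -/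
def scalH (e : ι → X) : R := ∑ i, C.rho e (e i) (C.J (e i))

/-- The Riemannian Laplacian `Δ f = -tr_g (D df)`. -/
def lap (e : ι → X) (f : R) : R :=
  - ∑ i, (C.act (e i) (C.act (e i) f) - C.act (C.D (e i) (e i)) f)

/-- `e` is a `g`-orthonormal frame of the module of vector fields. -/
def IsFrame (e : ι → X) : Prop :=
  (∀ i j, C.g (e i) (e j) = if i = j then 1 else 0) ∧
    ∀ x, x = ∑ i, C.g x (e i) • e i

/-- `x` is a Killing vector field: `L_x g = 0`. -/
def Killing (x : X) : Prop :=
  ∀ y z, C.act x (C.g y z) - C.g (C.bracket x y) z - C.g y (C.bracket x z) = 0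

/-- `x` is a (pseudo-)holomorphic vector field: `L_x J = 0`. -/
def Holomorphic (x : X) : Prop :=
  ∀ y, C.bracket x (C.J y) = C.J (C.bracket x y)

/-- `x` is hamiltonian with hamiltonian function `f`: `ω(x, ·) = -df`. -/
def Hamiltonian (x : X) (f : R) : Prop := ∀ y, C.ω x y = - C.act y f

end AK

end


noncomputable section Aux

namespace AKAux

open AK

variable {R : Type*} {X : Type*} [CommRing R] [Algebra ℝ R]
  [AddCommGroup X] [Module R X] [Module ℝ X] [IsScalarTower ℝ R X] (C : AK R X)

lemma g_zero₂ (x : X) : C.g x 0 = 0 := by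
  have h := C.g_add₂ x 0 0
  rw [add_zero] at h
  exact (left_eq_add.mp h)

lemma g_neg₂ (x y : X) : C.g x (-y) = - C.g x y := by
  have h := C.g_add₂ x y (-y)
  rw [add_neg_cancel, g_zero₂] at h
  exact (neg_eq_of_add_eq_zero_right h.symm).symm

lemma g_sub₂ (x y z : X) : C.g x (y - z) = C.g x y - C.g x z := by
  rw [sub_eq_add_neg, C.g_add₂, g_neg₂, sub_eq_add_neg]

lemma J_zero : C.J 0 = 0 := by
  have h := C.J_add 0 0
  rw [add_zero] at h
  exact (left_eq_add.mp h)

lemma J_neg (x : X) : C.J (-x) = - C.J x := by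
  have h := C.J_add x (-x)
  rw [add_neg_cancel, J_zero] at h
  exact (neg_eq_of_add_eq_zero_right h.symm).symm

lemma J_sub (x y : X) : C.J (x - y) = C.J x - C.J y := by
  rw [sub_eq_add_neg, C.J_add, J_neg, sub_eq_add_neg]

lemma J_smulR (r : ℝ) (x : X) : C.J (r • x) = r • C.J x := by
  rw [← algebraMap_smul R r x, C.J_smul, algebraMap_smul]

lemma g_smulR₂ (r : ℝ) (x y : X) : C.g x (r • y) = algebraMap ℝ R r * C.g x y := by
  rw [← algebraMap_smul R r y, C.g_smul₂]

lemma D_zero₂ (x : X) : C.D x 0 = 0 := by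
  have h := C.D_add₂ x 0 0
  rw [add_zero] at h
  exact (left_eq_add.mp h)

lemma D_neg₂ (x y : X) : C.D x (-y) = - C.D x y := by
  have h := C.D_add₂ x y (-y)
  rw [add_neg_cancel, D_zero₂] at h
  exact (neg_eq_of_add_eq_zero_right h.symm).symm

lemma act_zero (x : X) : C.act x 0 = 0 := by
  have h := C.act_addf x 0 0
  rw [add_zero] at h
  exact (left_eq_add.mp h)

lemma act_neg (x : X) (f : R) : C.act x (-f) = - C.act x f := by
  have h := C.act_addf x f (-f)
  rw [add_neg_cancel, act_zero] at h
  exact (neg_eq_of_add_eq_zero_right h.symm).symm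

/-- `g(Jx, y) = -g(x, Jy)`. -/
lemma skewJ (x y : X) : C.g (C.J x) y = - C.g x (C.J y) := by
  have h := C.g_Jinv x (C.J y)
  rw [C.J_sq, g_neg₂] at h
  exact neg_eq_iff_eq_neg.mp h

/-- `ω(x,y) = -g(x, Jy)`. -/
lemma omega_eq (x y : X) : C.ω x y = - C.g x (C.J y) := by
  have h := C.compat x (-(C.J y))
  rw [J_neg, C.J_sq, neg_neg, g_neg₂] at h
  exact h.symm

lemma D_zero₁ (x : X) : C.D 0 x = 0 := by
  have h := C.D_add₁ 0 0 x
  rw [add_zero] at h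
  exact (left_eq_add.mp h)

lemma D_neg₁ (x y : X) : C.D (-x) y = - C.D x y := by
  have h := C.D_add₁ x (-x) y
  rw [add_neg_cancel, D_zero₁] at h
  exact (neg_eq_of_add_eq_zero_right h.symm).symm

lemma bracket_neg₁ (x y : X) : C.bracket (-x) y = - C.bracket x y := by
  rw [← C.D_torsionfree, ← C.D_torsionfree, D_neg₁, D_neg₂]
  abel

/-- Anti-invariance of the Nijenhuis tensor in the first argument. -/
lemma N_J₁ (x y : X) : C.N (C.J x) y = - C.J (C.N x y) := by
  unfold AK.N
  rw [J_smulR, ← smul_neg]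
  congr 1
  rw [C.J_sq x, bracket_neg₁, bracket_neg₁, J_neg,
    J_sub, J_sub, J_sub, C.J_sq, C.J_sq]
  abel

end AKAux

end Aux


/-- If the identity `(D_X ω)(Y,Z) = 2 g(JX, N(Y,Z))` (identity (2.4)) holds on
an almost-Kähler manifold, then `D_{JX} J = -J ∘ (D_X J)` (identity (2.5)). -/
theorem DJ_anti_invariant_of_nijenhuis_identity
    {R : Type*} {X : Type*} [CommRing R] [Algebra ℝ R]
    [AddCommGroup X] [Module R X] [Module ℝ X] [IsScalarTower ℝ R X]
    (C : AK R X)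
    (h24 : ∀ x y z,
      C.act x (C.ω y z) - C.ω (C.D x y) z - C.ω y (C.D x z)
        = 2 * C.g (C.J x) (C.N y z)) :
    ∀ x y, C.DJ (C.J x) y = - C.J (C.DJ x y) := by
  have key : ∀ x y z, C.g y (C.DJ x z) = -(2 * C.g (C.J x) (C.N y z)) := by
    intro x y z
    have h := h24 x y z
    rw [AKAux.omega_eq, AKAux.omega_eq, AKAux.omega_eq, AKAux.act_neg,
      C.D_metric] at h
    unfold AK.DJ
    rw [AKAux.g_sub₂]
    linear_combination -h
  intro x y
  have hz : ∀ z, C.g (C.DJ (C.J x) y - (- C.J (C.DJ x y))) z = 0 := by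
    intro z
    rw [C.g_symm, AKAux.g_sub₂, AKAux.g_neg₂]
    have h1 : C.g z (C.DJ (C.J x) y) = 2 * C.g x (C.N z y) := by
      rw [key (C.J x) z y, C.J_sq, C.g_symm (-x), AKAux.g_neg₂, C.g_symm]
      ring
    have h2 : C.g z (C.J (C.DJ x y)) = -(2 * C.g x (C.N z y)) := by
      have hs := AKAux.skewJ C z (C.DJ x y)
      have hs' : C.g z (C.J (C.DJ x y)) = - C.g (C.J z) (C.DJ x y) := by
        rw [hs]; exact (neg_neg _).symm
      rw [hs', key x (C.J z) y, AKAux.N_J₁, AKAux.g_neg₂, C.g_Jinv]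
      ring
    rw [h1, h2]
    ring
  exact sub_eq_zero.mp (C.g_nondeg _ hz)
end

section
/- Let J be an almost-complex structure and g a J-compatible metric on a vector space, with ω(·,·) = g(J·,·). If X is a vector field with L_X ω = 0 on an almost-Kähler manifold (M, ω, J, g), then the symmetric part of the tensor D^g X (equivalently of the 1-form valued tensor g(D^g_· X, ·)) equals (1/2) g((L_X J) J ·, ·); in particular, the symmetric part of D^g(d^c f) is J-anti-invariant for any smooth function f (taking X = grad_ω f). -/
section Aux

namespace AK

variable {R : Type*} {X : Type*} [CommRing R] [Algebra ℝ R]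
  [AddCommGroup X] [Module R X] (C : AK R X)

lemma act_zero (x : X) : C.act x 0 = 0 := by
  have h := C.act_addf x 0 0
  simpa using h

lemma act_neg (x : X) (a : R) : C.act x (-a) = -C.act x a := by
  have h := C.act_addf x a (-a)
  rw [add_neg_cancel, C.act_zero] at h
  exact eq_neg_of_add_eq_zero_right h.symm

lemma D_zero₂ (x : X) : C.D x 0 = 0 := by
  have h := C.D_add₂ x 0 0
  simpa using h

lemma D_neg₂ (x y : X) : C.D x (-y) = -C.D x y := by
  have h := C.D_add₂ x y (-y)
  rw [add_neg_cancel, C.D_zero₂] at h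
  exact eq_neg_of_add_eq_zero_right h.symm

lemma D_neg₁ (x y : X) : C.D (-x) y = -C.D x y := by
  rw [← neg_one_smul R x, C.D_tensor, neg_one_smul]

lemma J_neg (x : X) : C.J (-x) = -C.J x := by
  rw [← neg_one_smul R x, C.J_smul, neg_one_smul]

lemma g_neg₁ (x y : X) : C.g (-x) y = -C.g x y := by
  rw [← neg_one_smul R x, C.g_smul₁, neg_one_mul]

lemma g_neg₂ (x y : X) : C.g x (-y) = -C.g x y := by
  rw [← neg_one_smul R y, C.g_smul₂, neg_one_mul]

lemma g_sub₁ (x y z : X) : C.g (x - y) z = C.g x z - C.g y z := by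
  rw [sub_eq_add_neg, C.g_add₁, C.g_neg₁, sub_eq_add_neg]

lemma bracket_neg₂ (x y : X) : C.bracket x (-y) = -C.bracket x y := by
  have h1 := C.D_torsionfree x (-y)
  have h2 := C.D_torsionfree x y
  rw [C.D_neg₂, C.D_neg₁] at h1
  rw [← h1, ← h2]; abel

lemma ω_eq (u v : X) : C.ω u v = -C.g u (C.J v) := by
  have h := C.compat u (-(C.J v))
  rw [C.J_neg, C.J_sq, neg_neg] at h
  rw [← h, C.g_neg₂]

lemma gJ₁ (u v : X) : C.g (C.J u) v = -C.g u (C.J v) := by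
  have h := C.g_Jinv u (-(C.J v))
  rw [C.J_neg, C.J_sq, neg_neg] at h
  rw [h, C.g_neg₂]

lemma key (x : X)
    (hL : ∀ y z,
      C.act x (C.ω y z) - C.ω (C.bracket x y) z - C.ω y (C.bracket x z) = 0)
    (y z : X) :
    C.g (C.D y x) z + C.g (C.D z x) y
      = C.g (C.bracket x (C.J y)) (C.J z) - C.g (C.bracket x y) z := by
  have h1 := hL (C.J y) z
  rw [C.ω_eq (C.J y) z, C.g_Jinv, C.act_neg, C.ω_eq (C.bracket x (C.J y)) z,
    C.ω_eq (C.J y) (C.bracket x z), C.g_Jinv] at h1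
  have h2 := C.D_metric x y z
  have ty := C.D_torsionfree x y
  have tz := C.D_torsionfree x z
  rw [sub_eq_iff_eq_add.mp ty, sub_eq_iff_eq_add.mp tz, C.g_add₁, C.g_add₂] at h2
  rw [C.g_symm y (C.D z x), C.g_symm y (C.bracket x z)] at h2
  rw [C.g_symm y (C.bracket x z)] at h1
  linear_combination -h2 - h1

end AK

end Aux

/-- If `L_X ω = 0`, then the symmetric part of the tensor `g(D^g_· X, ·)`
equals `(1/2) g((L_X J) J·, ·)`; in particular, for `X = grad_ω f` the
symmetric part of `D^g (d^c f)` is `J`-anti-invariant (the tensorial fact used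
in Proposition 3.2). Here `(d^c f)(v) = -(df)(Jv)` and
`(D_u (d^c f))(v) = u·(d^c f(v)) - d^c f(D_u v)`. -/
theorem symmetric_part_of_DX_and_anti_invariance
    {R : Type*} {X : Type*} [CommRing R] [Algebra ℝ R]
    [AddCommGroup X] [Module R X] [Module ℝ X] [IsScalarTower ℝ R X]
    (C : AK R X) (x : X)
    (hLω : ∀ y z,
      C.act x (C.ω y z) - C.ω (C.bracket x y) z - C.ω y (C.bracket x z) = 0) :
    (∀ y z,
      (2 : ℝ)⁻¹ • (C.g (C.D y x) z + C.g (C.D z x) y)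
        = (2 : ℝ)⁻¹ •
            C.g (C.bracket x (C.J (C.J y)) - C.J (C.bracket x (C.J y))) z) ∧
    (∀ f : R, C.Hamiltonian x f →
      ∀ S : X → X → R,
        (∀ u v, S u v = C.act u (-(C.act (C.J v) f)) + C.act (C.J (C.D u v)) f) →
        ∀ y z,
          (2 : ℝ)⁻¹ • (S (C.J y) (C.J z) + S (C.J z) (C.J y))
            = -((2 : ℝ)⁻¹ • (S y z + S z y))) := by

  constructor
  · intro y z
    have hkey := C.key x hLω y z
    have : C.g (C.D y x) z + C.g (C.D z x) y
        = C.g (C.bracket x (C.J (C.J y)) - C.J (C.bracket x (C.J y))) z := by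
      rw [C.g_sub₁, C.J_sq, C.bracket_neg₂, C.g_neg₁, C.gJ₁, hkey]
      ring
    rw [this]
  · intro f hf S hS y z
    have hact : ∀ w, C.act (C.J w) f = -C.g x w := by
      intro w
      have h := hf (C.J w)
      rw [C.ω_eq, C.J_sq, C.g_neg₂, neg_neg] at h
      linear_combination h
    have hSval : ∀ u v, S u v = C.g (C.D u x) v := by
      intro u v
      rw [hS u v, hact v, hact (C.D u v), neg_neg]
      linear_combination C.D_metric u x v
    have e1 : S (C.J y) (C.J z) + S (C.J z) (C.J y)
        = C.g (C.bracket x y) z - C.g (C.bracket x (C.J y)) (C.J z) := by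
      rw [hSval, hSval, C.key x hLω (C.J y) (C.J z), C.J_sq, C.J_sq,
        C.bracket_neg₂, C.g_neg₁, C.g_neg₂]
      ring
    have e2 : S y z + S z y
        = C.g (C.bracket x (C.J y)) (C.J z) - C.g (C.bracket x y) z := by
      rw [hSval, hSval]
      exact C.key x hLω y z
    rw [e1, e2, ← smul_neg]
    congr 1
    ring
end
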